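/- Let n ≥ 1 and 0 ≤ p ≤ n be integers and let i, j, k, ℓ ∈ {1,…,n} be pairwise distinct. Then ∑_{|I|=p} sgn_I(i)·sgn_I(j)·sgn_I(k)·sgn_I(ℓ) = 16·C(n−4,p−2) − 8·C(n−2,p−1) + C(n,p). -/
import Mathlib

open Finset

/-- Binomial coefficient with the convention `C a b = 0` if `b < 0` or `b > a`. -/
def C (a b : ℤ) : ℤ := if 0 ≤ b ∧ b ≤ a then (a.toNat.choose b.toNat : ℤ) else 0


lemma pascal (a b : ℤ) (ha : 0 ≤ a) : C (a+1) b = C a b + C a (b-1) := by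
  unfold C
  split_ifs with h1 h2 h3 h2 h3 <;> try omega
  · have hb : 1 ≤ b := by omega
    have e1 : (a+1).toNat = a.toNat + 1 := by omega
    have e2 : b.toNat = (b-1).toNat + 1 := by omega
    rw [e1, e2, Nat.choose_succ_succ]
    push_cast; ring
  · have hb : b = 0 := by omega
    simp [hb]
  · have e1 : (a+1).toNat = a.toNat + 1 := by omega
    have e2 : b.toNat = (b-1).toNat + 1 := by omega
    have e3 : a.toNat.choose ((b-1).toNat+1) = 0 := Nat.choose_eq_zero_of_lt (by omega)
    rw [e1, e2, Nat.choose_succ_succ, e3]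
    push_cast; ring

lemma pascal2 (a b : ℤ) (ha : 0 ≤ a) : C (a+2) b = C a b + 2 * C a (b-1) + C a (b-2) := by
  have h1 : C (a+2) b = C (a+1) b + C (a+1) (b-1) := by
    have : a + 2 = (a+1) + 1 := by ring
    rw [this, pascal _ _ (by omega)]
  rw [h1, pascal _ _ ha, pascal _ _ ha]
  ring_nf

lemma pascal4 (a b : ℤ) (ha : 0 ≤ a) :
    C (a+4) b = C a b + 4 * C a (b-1) + 6 * C a (b-2) + 4 * C a (b-3) + C a (b-4) := by
  have h1 : C (a+4) b = C (a+2) b + 2 * C (a+2) (b-1) + C (a+2) (b-2) := by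
    have : a + 4 = (a+2) + 2 := by ring
    rw [this, pascal2 _ _ (by omega)]
  rw [h1, pascal2 _ _ ha, pascal2 _ _ ha, pascal2 _ _ ha]
  ring_nf

lemma C_sub (n p a b : ℕ) (ha : a ≤ n) :
    C ((n:ℤ) - a) ((p:ℤ) - b) = if b ≤ p then ((n-a).choose (p-b) : ℤ) else 0 := by
  unfold C
  split_ifs with h1 h2 h2
  · have e1 : ((n:ℤ) - a).toNat = n - a := by omega
    have e2 : ((p:ℤ) - b).toNat = p - b := by omega
    rw [e1, e2]
  · exfalso; omega
  · symm; norm_cast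
    exact Nat.choose_eq_zero_of_lt (by omega)
  · rfl

lemma fiber_card {α : Type*} [Fintype α] [DecidableEq α] (S J : Finset α) (hJ : J ⊆ S) (p : ℕ) :
    ((Finset.powersetCard p (univ : Finset α)).filter (fun I => I ∩ S = J)).card
      = if J.card ≤ p then (Fintype.card α - S.card).choose (p - J.card) else 0 := by
  split_ifs with h
  · rw [← Finset.card_compl S, ← Finset.card_powersetCard]
    apply Finset.card_bij (fun I _ => I \ S)
    · intro I hI
      simp only [mem_filter, mem_powersetCard] at hI
      obtain ⟨⟨-, hc⟩, hIS⟩ := hI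
      rw [mem_powersetCard]
      constructor
      · intro x hx; simp only [mem_sdiff] at hx; simp [hx.2]
      · have h2 := Finset.card_sdiff_add_card_inter I S
        have e : (I \ S).card = I.card - (I ∩ S).card := by omega
        rw [e, hIS, hc]
    · intro I1 h1 I2 h2 he
      simp only [mem_filter, mem_powersetCard] at h1 h2
      have : I1 ∩ S = I2 ∩ S := h1.2.trans h2.2.symm
      calc I1 = (I1 \ S) ∪ (I1 ∩ S) := by rw [sdiff_union_inter]
        _ = (I2 \ S) ∪ (I2 ∩ S) := by rw [he, this]
        _ = I2 := by rw [sdiff_union_inter]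
    · intro K hK
      rw [mem_powersetCard] at hK
      obtain ⟨hKsub, hKc⟩ := hK
      have hdisj : Disjoint K S := by
        rw [Finset.disjoint_left]; intro x hx; have := hKsub hx; simp at this; exact this
      refine ⟨K ∪ J, ?_, ?_⟩
      · simp only [mem_filter, mem_powersetCard]
        refine ⟨⟨subset_univ _, ?_⟩, ?_⟩
        · rw [card_union_of_disjoint (hdisj.mono_right hJ), hKc]
          have hJS := card_le_card hJ
          omega
        · rw [union_inter_distrib_right]
          rw [Finset.inter_eq_left.mpr hJ]
          rw [(Finset.disjoint_iff_inter_eq_empty.mp hdisj)]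
          simp
      · rw [union_sdiff_distrib, Finset.sdiff_eq_empty_iff_subset.mpr hJ,
          Finset.sdiff_eq_self_of_disjoint hdisj]
        simp
  · rw [Finset.card_eq_zero, Finset.filter_eq_empty_iff]
    intro I hI
    rw [mem_powersetCard] at hI
    intro hIS
    have : J.card ≤ I.card := by
      rw [← hIS]; exact card_le_card (inter_subset_left)
    omega

lemma prod_sign {α : Type*} [DecidableEq α] (s t : Finset α) :
    (∏ x ∈ s, (if x ∈ t then (1:ℤ) else -1)) = (-1)^((s \ t).card) := by
  rw [← Finset.prod_filter_mul_prod_filter_not s (· ∈ t)]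
  have h1 : ∏ x ∈ s.filter (· ∈ t), (if x ∈ t then (1:ℤ) else -1) = 1 := by
    apply Finset.prod_eq_one
    intro x hx
    simp only [mem_filter] at hx
    simp [hx.2]
  have h2 : ∏ x ∈ s.filter (fun x => ¬ x ∈ t), (if x ∈ t then (1:ℤ) else -1)
      = (-1)^((s \ t).card) := by
    rw [Finset.sdiff_eq_filter]
    apply Finset.prod_eq_pow_card
    intro x hx
    simp only [mem_filter] at hx
    simp [hx.2]
  rw [h1, h2, one_mul]

lemma key (n p : ℕ) (hn : 4 ≤ n) :
    ∑ t ∈ Finset.range 5, ((Nat.choose 4 t : ℤ)) *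
        ((-1)^t * (if t ≤ p then ((n-4).choose (p-t) : ℤ) else 0))
      = 16 * C ((n : ℤ) - 4) ((p : ℤ) - 2) - 8 * C ((n : ℤ) - 2) ((p : ℤ) - 1)
        + C (n : ℤ) (p : ℤ) := by
  have ha : (0:ℤ) ≤ (n:ℤ) - 4 := by omega
  have hCt : ∀ t : ℕ, (if t ≤ p then ((n-4).choose (p-t) : ℤ) else 0)
      = C ((n:ℤ) - 4) ((p:ℤ) - t) := fun t => (C_sub n p 4 t hn).symm
  have e2 : C ((n:ℤ) - 2) ((p:ℤ) - 1)
      = C ((n:ℤ)-4) ((p:ℤ)-1) + 2 * C ((n:ℤ)-4) ((p:ℤ)-1-1) + C ((n:ℤ)-4) ((p:ℤ)-1-2) := by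
    rw [show ((n:ℤ) - 2) = ((n:ℤ)-4) + 2 from by ring, pascal2 _ _ ha]
  have e4 : C ((n:ℤ)) ((p:ℤ))
      = C ((n:ℤ)-4) (p:ℤ) + 4 * C ((n:ℤ)-4) ((p:ℤ)-1) + 6 * C ((n:ℤ)-4) ((p:ℤ)-2)
        + 4 * C ((n:ℤ)-4) ((p:ℤ)-3) + C ((n:ℤ)-4) ((p:ℤ)-4) := by
    rw [show C ((n:ℤ)) ((p:ℤ)) = C (((n:ℤ)-4) + 4) (p:ℤ) from by norm_num, pascal4 _ _ ha]
  rw [e2, e4]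
  simp only [Finset.sum_range_succ, Finset.sum_range_zero, hCt]
  simp only [show ((Nat.choose 4 0 : ℕ):ℤ) = 1 from by norm_cast,
    show ((Nat.choose 4 1 : ℕ):ℤ) = 4 from by norm_cast,
    show ((Nat.choose 4 2 : ℕ):ℤ) = 6 from by norm_cast,
    show ((Nat.choose 4 3 : ℕ):ℤ) = 4 from by norm_cast,
    show ((Nat.choose 4 4 : ℕ):ℤ) = 1 from by norm_cast]
  push_cast
  ring_nf

theorem stmt2 (n p : ℕ) (hn : 1 ≤ n) (hp : p ≤ n) (i j k l : Fin n)
    (hij : i ≠ j) (hik : i ≠ k) (hil : i ≠ l) (hjk : j ≠ k) (hjl : j ≠ l) (hkl : k ≠ l) :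
    ∑ I ∈ Finset.powersetCard p (Finset.univ : Finset (Fin n)),
      ((if i ∈ I then (1 : ℤ) else -1) * (if j ∈ I then (1 : ℤ) else -1) *
        (if k ∈ I then (1 : ℤ) else -1) * (if l ∈ I then (1 : ℤ) else -1)) =
      16 * C ((n : ℤ) - 4) ((p : ℤ) - 2) - 8 * C ((n : ℤ) - 2) ((p : ℤ) - 1) +
        C (n : ℤ) (p : ℤ) := by
  classical
  set S : Finset (Fin n) := {i, j, k, l} with hS
  have hScard : S.card = 4 := by
    rw [hS, card_insert_of_notMem (by simp [hij, hik, hil]),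
        card_insert_of_notMem (by simp [hjk, hjl]),
        card_insert_of_notMem (by simp [hkl]), card_singleton]
  have hn4 : 4 ≤ n := by
    have h := Finset.card_le_univ S
    simp only [hScard, Finset.card_univ, Fintype.card_fin] at h
    exact h
  have hsummand : ∀ I : Finset (Fin n),
      ((if i ∈ I then (1:ℤ) else -1) * (if j ∈ I then (1:ℤ) else -1) *
       (if k ∈ I then (1:ℤ) else -1) * (if l ∈ I then (1:ℤ) else -1))
      = ∏ x ∈ S, (if x ∈ I then (1:ℤ) else -1) := by
    intro I
    rw [hS, prod_insert (by simp [hij, hik, hil]), prod_insert (by simp [hjk, hjl]),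
        prod_insert (by simp [hkl]), prod_singleton]
    ring
  calc ∑ I ∈ Finset.powersetCard p (Finset.univ : Finset (Fin n)),
      ((if i ∈ I then (1 : ℤ) else -1) * (if j ∈ I then (1 : ℤ) else -1) *
        (if k ∈ I then (1 : ℤ) else -1) * (if l ∈ I then (1 : ℤ) else -1))
      = ∑ I ∈ Finset.powersetCard p (Finset.univ : Finset (Fin n)),
          ∏ x ∈ S, (if x ∈ I then (1:ℤ) else -1) :=
        Finset.sum_congr rfl (fun I _ => hsummand I)
    _ = ∑ J ∈ S.powerset, ∑ I ∈ (Finset.powersetCard p univ).filter (fun I => I ∩ S = J),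
          ∏ x ∈ S, (if x ∈ I then (1:ℤ) else -1) :=
        (Finset.sum_fiberwise_of_maps_to
          (fun I _ => Finset.mem_powerset.mpr Finset.inter_subset_right) _).symm
    _ = ∑ J ∈ S.powerset,
          (if J.card ≤ p then ((n-4).choose (p - J.card) : ℤ) else 0) * (-1)^(J.card) := by
        apply Finset.sum_congr rfl
        intro J hJmem
        rw [Finset.mem_powerset] at hJmem
        have hfix : ∀ I ∈ (Finset.powersetCard p univ).filter (fun I => I ∩ S = J),
            (∏ x ∈ S, (if x ∈ I then (1:ℤ) else -1)) = (-1)^(J.card) := by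
          intro I hI
          simp only [mem_filter] at hI
          have hm : ∀ x ∈ S, ((if x ∈ I then (1:ℤ) else -1)) = (if x ∈ J then (1:ℤ) else -1) := by
            intro x hx
            have hiff : x ∈ I ↔ x ∈ J := by
              rw [← hI.2]; simp [hx]
            simp only [hiff]
          rw [Finset.prod_congr rfl hm, prod_sign]
          have hcd : (S \ J).card = 4 - J.card := by
            rw [card_sdiff_of_subset hJmem, hScard]
          have hJ4 : J.card ≤ 4 := hScard ▸ card_le_card hJmem
          rw [hcd, neg_one_pow_eq_pow_mod_two, neg_one_pow_eq_pow_mod_two (n := J.card)]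
          congr 1
          omega
        rw [Finset.sum_congr rfl hfix, Finset.sum_const, nsmul_eq_mul,
          fiber_card S J hJmem p]
        simp only [Fintype.card_fin, hScard]
        push_cast [apply_ite (fun (m : ℕ) => (m : ℤ))]
        ring
    _ = ∑ t ∈ Finset.range 5, ((Nat.choose 4 t : ℤ)) *
        ((-1)^t * (if t ≤ p then ((n-4).choose (p-t) : ℤ) else 0)) := by
        rw [Finset.sum_powerset, hScard]
        apply Finset.sum_congr rfl
        intro t ht
        have hinner : ∀ J ∈ Finset.powersetCard t S,
            (if J.card ≤ p then ((n-4).choose (p - J.card) : ℤ) else 0) * (-1)^(J.card)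
            = ((-1)^t * (if t ≤ p then ((n-4).choose (p-t) : ℤ) else 0)) := by
          intro J hJ
          rw [Finset.mem_powersetCard] at hJ
          rw [hJ.2]
          ring
        rw [Finset.sum_congr rfl hinner, Finset.sum_const, nsmul_eq_mul,
          Finset.card_powersetCard, hScard]
    _ = 16 * C ((n : ℤ) - 4) ((p : ℤ) - 2) - 8 * C ((n : ℤ) - 2) ((p : ℤ) - 1) +
        C (n : ℤ) (p : ℤ) := key n p hn4
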